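/- arXiv:1008.4164 — 13 statements merged into one kernel-verified Lean document; each statement's English description precedes it below -/
import Mathlib

section
/- A nonzero module M over a ring R is coprime (i.e. for every two-sided ideal I of R, IM = M or IM = 0) if and only if for every proper submodule L of M, the annihilator of M/L equals the annihilator of M. -/
section Prelim

variable {R : Type*} [Ring R] {M : Type*} [AddCommGroup M] [Module R M]

/-- A left ideal of `R` is two-sided. -/
def IsTwoSidedIdeal (I : Ideal R) : Prop := ∀ r ∈ I, ∀ s : R, r * s ∈ I

/-- `M` is a coprime module: `IM = M` or `IM = 0` for every two-sided ideal `I`. -/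
def IsCoprimeModule (R M : Type*) [Ring R] [AddCommGroup M] [Module R M] : Prop :=
  ∀ I : Ideal R, IsTwoSidedIdeal I →
    I • (⊤ : Submodule R M) = ⊤ ∨ I • (⊤ : Submodule R M) = ⊥

/-- A proper submodule `K ⊊ M` is a coprime submodule of `M`:
`IM + K = M` or `IM ⊆ K` for every two-sided ideal `I`. -/
def IsCoprimeSubmodule (K : Submodule R M) : Prop :=
  K ≠ ⊤ ∧ ∀ I : Ideal R, IsTwoSidedIdeal I →
    I • (⊤ : Submodule R M) ⊔ K = ⊤ ∨ I • (⊤ : Submodule R M) ≤ K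

/-- A nonzero submodule `K ≤ M` is second: `IK = K` or `IK = 0`
for every two-sided ideal `I`. -/
def IsSecondSubmodule (K : Submodule R M) : Prop :=
  K ≠ ⊥ ∧ ∀ I : Ideal R, IsTwoSidedIdeal I → I • K = K ∨ I • K = ⊥

/-- The ideal `(K :_R M) = {r | r • M ⊆ K}`. -/
def colonIdeal (K : Submodule R M) : Ideal R where
  carrier := {r : R | ∀ m : M, r • m ∈ K}
  zero_mem' := by intro m; rw [zero_smul]; exact K.zero_mem
  add_mem' := by intro a b ha hb m; rw [add_smul]; exact K.add_mem (ha m) (hb m)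
  smul_mem' := by intro s r hr m; rw [smul_eq_mul, mul_smul]; exact K.smul_mem s (hr m)

/-- The annihilator `(0 :_M I)` of a two-sided ideal `I` in `M`. -/
def annSubmodule (I : Ideal R) (hI : IsTwoSidedIdeal I) : Submodule R M where
  carrier := {m : M | ∀ r ∈ I, r • m = 0}
  zero_mem' := by intro r _; exact smul_zero r
  add_mem' := by intro a b ha hb r hr; rw [smul_add, ha r hr, hb r hr, add_zero]
  smul_mem' := by intro s m hm r hr; rw [← mul_smul]; exact hm _ (hI r hr s)

/-- A nonzero submodule `K` is strongly hollow in `M`. -/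
def StronglyHollowIn (K : Submodule R M) : Prop :=
  K ≠ ⊥ ∧ ∀ L₁ L₂ : Submodule R M, K ≤ L₁ ⊔ L₂ → K ≤ L₁ ∨ K ≤ L₂

/-- A proper submodule `K` is strongly irreducible in `M`. -/
def StronglyIrreducibleIn (K : Submodule R M) : Prop :=
  K ≠ ⊤ ∧ ∀ L₁ L₂ : Submodule R M, L₁ ⊓ L₂ ≤ K → L₁ ≤ K ∨ L₂ ≤ K

/-- `V^s(L)`: the second submodules of `M` contained in `L`. -/
def secondVariety (L : Submodule R M) : Set (Submodule R M) :=
  {K | IsSecondSubmodule K ∧ K ≤ L}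

/-- `V^c(L)`: the coprime submodules of `M` containing `L`. -/
def coprimeVariety (L : Submodule R M) : Set (Submodule R M) :=
  {K | IsCoprimeSubmodule K ∧ L ≤ K}

lemma IsTwoSidedIdeal.inf {I J : Ideal R} (hI : IsTwoSidedIdeal I)
    (hJ : IsTwoSidedIdeal J) : IsTwoSidedIdeal (I ⊓ J) := by
  intro r hr s
  rw [Submodule.mem_inf] at hr ⊢
  exact ⟨hI r hr.1 s, hJ r hr.2 s⟩

lemma IsTwoSidedIdeal.mul {I J : Ideal R} (hJ : IsTwoSidedIdeal J) :
    IsTwoSidedIdeal (I * J) := by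
  intro r hr s
  refine Submodule.smul_induction_on hr ?_ ?_
  · intro a ha b hb
    rw [smul_eq_mul, mul_assoc]
    exact Ideal.mul_mem_mul ha (hJ b hb s)
  · intro x y hx hy
    rw [add_mul]
    exact Ideal.add_mem _ hx hy

end Prelim

/-- A nonzero module `M` is coprime iff for every proper submodule `L`,
the annihilator of `M/L` (i.e. `(L :_R M)`) equals the annihilator of `M`. -/
theorem statement0 {R M : Type*} [Ring R] [AddCommGroup M] [Module R M] [Nontrivial M] :
    IsCoprimeModule R M ↔
      ∀ L : Submodule R M, L ≠ ⊤ → colonIdeal L = Module.annihilator R M := by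
  constructor
  · intro hc L hL
    apply le_antisymm
    · intro r hr
      have h2 : IsTwoSidedIdeal (colonIdeal L) := by
        intro a ha s m
        rw [mul_smul]; exact ha _
      have hle : (colonIdeal L) • (⊤ : Submodule R M) ≤ L := by
        rw [Submodule.smul_le]
        intro x hx n _
        exact hx n
      rcases hc _ h2 with h | h
      · exact absurd (top_le_iff.mp (h ▸ hle)) hL
      · rw [Module.mem_annihilator]
        intro m
        have : r • m ∈ (colonIdeal L) • (⊤ : Submodule R M) :=
          Submodule.smul_mem_smul hr trivial
        rw [h] at this
        exact this
    · intro r hr m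
      rw [Module.mem_annihilator] at hr
      rw [hr m]; exact L.zero_mem
  · intro h I hI
    by_cases hT : I • (⊤ : Submodule R M) = ⊤
    · exact Or.inl hT
    · right
      have hle : I ≤ colonIdeal (I • (⊤ : Submodule R M)) := by
        intro r hr m
        exact Submodule.smul_mem_smul hr trivial
      rw [h _ hT] at hle
      rw [eq_bot_iff, Submodule.smul_le]
      intro r hr n _
      have := Module.mem_annihilator.mp (hle hr) n
      simp [this]
end

section
/- If K is a coprime submodule of M and L is a proper nonzero submodule of M, then either K ∩ L is a coprime submodule of L, or (K + L)/L is a coprime submodule of M/L. -/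
/-- If `K` is a coprime submodule of `M` and `L` is a proper nonzero
submodule of `M`, then `K ⊓ L` is a coprime submodule of `L` or `(K + L)/L` is a
coprime submodule of `M/L`. -/
theorem statement2 {R M : Type*} [Ring R] [AddCommGroup M] [Module R M]
    (K L : Submodule R M) (hK : IsCoprimeSubmodule K) (hL0 : L ≠ ⊥) (hL : L ≠ ⊤) :
    IsCoprimeSubmodule ((K ⊓ L).comap L.subtype) ∨
      IsCoprimeSubmodule ((K ⊔ L).map L.mkQ) := by
  by_cases htop : K ⊔ L = ⊤
  · left
    have hinj : Function.Injective L.subtype := Subtype.val_injective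
    constructor
    · intro h
      have hLK : L ≤ K := by
        intro x hx
        have hx' : (⟨x, hx⟩ : L) ∈ (⊤ : Submodule R L) := trivial
        rw [← h, Submodule.mem_comap] at hx'
        exact hx'.1
      exact hK.1 (by rw [← htop, sup_eq_left.mpr hLK])
    · intro I hI
      rcases hK.2 I hI with h | h
      · left
        apply Submodule.map_injective_of_injective hinj
        rw [Submodule.map_sup, Submodule.map_smul'', Submodule.map_top,
          Submodule.range_subtype, Submodule.map_comap_subtype,
          inf_eq_right.mpr (inf_le_right : K ⊓ L ≤ L)]
        have h1 : I • L ⊔ K = ⊤ := by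
          have h2 : I • (⊤ : Submodule R M) = I • K ⊔ I • L := by
            rw [← Submodule.smul_sup, htop]
          have : (⊤ : Submodule R M) ≤ I • L ⊔ K := by
            rw [← h, h2]
            refine sup_le (sup_le ?_ le_sup_left) le_sup_right
            exact le_trans (Submodule.smul_le_right) le_sup_right
          exact top_le_iff.mp this
        rw [← sup_inf_assoc_of_le K (Submodule.smul_le_right (I := I) (N := L)), h1,
          top_inf_eq]
      · right
        rw [← Submodule.map_le_iff_le_comap, Submodule.map_smul'', Submodule.map_top,
          Submodule.range_subtype]
        exact le_inf (le_trans (Submodule.smul_mono le_rfl le_top) h)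
          Submodule.smul_le_right
  · right
    constructor
    · intro h
      apply htop
      have := congrArg (Submodule.comap L.mkQ) h
      rwa [Submodule.comap_map_mkQ, Submodule.comap_top,
        sup_eq_right.mpr (le_sup_right : L ≤ K ⊔ L)] at this
    · intro I hI
      have hq : I • (⊤ : Submodule R (M ⧸ L)) = Submodule.map L.mkQ (I • ⊤) := by
        rw [Submodule.map_smul'', Submodule.map_top, Submodule.range_mkQ]
      rcases hK.2 I hI with h | h
      · left
        rw [hq, ← Submodule.map_sup, ← sup_assoc, h, top_sup_eq, Submodule.map_top,
          Submodule.range_mkQ]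
      · right
        rw [hq]
        exact Submodule.map_mono (le_trans h le_sup_left)
end

section
/- If M is a completely coprime R-module (for every r ∈ R, rM = M or rM = 0), then the annihilator of M is a completely prime ideal (for all a, b ∈ R, ab ∈ ann(M) implies a ∈ ann(M) or b ∈ ann(M)). -/
/-- If `M` is completely coprime (for every `r : R`, `rM = M` or `rM = 0`),
then `ann_R(M)` is completely prime: `ab ∈ ann(M)` implies `a ∈ ann(M)` or `b ∈ ann(M)`. -/
theorem statement4 {R M : Type*} [Ring R] [AddCommGroup M] [Module R M] [Nontrivial M]
    (h : ∀ r : R, (∀ m : M, ∃ m' : M, r • m' = m) ∨ (∀ m : M, r • m = 0)) :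
    ∀ a b : R, (∀ m : M, (a * b) • m = 0) →
      (∀ m : M, a • m = 0) ∨ (∀ m : M, b • m = 0) := by
  intro a b hab
  rcases h b with hb | hb
  · left
    intro m
    obtain ⟨m', hm'⟩ := hb m
    rw [← hm', ← mul_smul]
    exact hab m'
  · right
    exact hb
end

section
/- If M is a comultiplication module (every submodule L satisfies L = (0 :_M ann_R(L))), then M is coprime if and only if ann_R(M) is a prime ideal. -/
/-- Annihilator of a submodule as a left ideal. -/
def annIdeal {R M : Type*} [Ring R] [AddCommGroup M] [Module R M]
    (N : Submodule R M) : Ideal R where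
  carrier := {r : R | ∀ x ∈ N, r • x = 0}
  zero_mem' := by intro x _; exact zero_smul R x
  add_mem' := by intro a b ha hb x hx; rw [add_smul, ha x hx, hb x hx, add_zero]
  smul_mem' := by intro s r hr x hx; rw [smul_eq_mul, mul_smul, hr x hx, smul_zero]

/-- If `M` is a comultiplication module (every submodule `L` equals
`(0 :_M ann_R(L))`), then `M` is coprime iff `ann_R(M)` is a prime ideal. -/
theorem statement6 {R M : Type*} [Ring R] [AddCommGroup M] [Module R M] [Nontrivial M]
    (hcomul : ∀ L : Submodule R M,
      (L : Set M) = {m : M | ∀ r : R, (∀ x ∈ L, r • x = 0) → r • m = 0}) :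
    IsCoprimeModule R M ↔
      (Module.annihilator R M ≠ ⊤ ∧
        ∀ I J : Ideal R, IsTwoSidedIdeal I → IsTwoSidedIdeal J →
          (∀ a ∈ I, ∀ b ∈ J, a * b ∈ Module.annihilator R M) →
          I ≤ Module.annihilator R M ∨ J ≤ Module.annihilator R M) := by
  constructor
  · intro hco
    refine ⟨?_, ?_⟩
    · intro h
      obtain ⟨m, hm⟩ := exists_ne (0 : M)
      have h1 : (1 : R) ∈ Module.annihilator R M := h ▸ Submodule.mem_top
      rw [Module.mem_annihilator] at h1
      exact hm (by simpa using h1 m)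
    · intro I J hI hJ hIJ
      rcases hco J hJ with h | h
      · left
        intro a ha
        rw [Module.mem_annihilator]
        intro m
        have hm : m ∈ J • (⊤ : Submodule R M) := by rw [h]; trivial
        refine Submodule.smul_induction_on (p := fun m => a • m = 0) hm ?_ ?_
        · intro b hb n _
          rw [← mul_smul]
          have := hIJ a ha b hb
          rw [Module.mem_annihilator] at this
          exact this n
        · intro x y hx hy
          rw [smul_add, hx, hy, add_zero]
      · right
        intro b hb
        rw [Module.mem_annihilator]
        intro m
        have hbm : b • m ∈ J • (⊤ : Submodule R M) :=
          Submodule.smul_mem_smul hb Submodule.mem_top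
        rw [h] at hbm
        simpa using hbm
  · rintro ⟨hne, hpr⟩ I hI
    have hJ2 : IsTwoSidedIdeal (annIdeal (I • (⊤ : Submodule R M))) := by
      intro r hr s x hx
      rw [mul_smul]
      exact hr _ (Submodule.smul_mem _ s hx)
    have hprod : ∀ a ∈ annIdeal (I • (⊤ : Submodule R M)), ∀ b ∈ I,
        a * b ∈ Module.annihilator R M := by
      intro a ha b hb
      rw [Module.mem_annihilator]
      intro m
      rw [mul_smul]
      exact ha _ (Submodule.smul_mem_smul hb Submodule.mem_top)
    rcases hpr _ I hJ2 hI hprod with h | h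
    · left
      rw [Submodule.eq_top_iff']
      intro m
      have key := hcomul (I • (⊤ : Submodule R M))
      have : m ∈ ((I • ⊤ : Submodule R M) : Set M) := by
        rw [key]
        intro r hr
        have hr' : r ∈ Module.annihilator R M := h hr
        rw [Module.mem_annihilator] at hr'
        exact hr' m
      exact this
    · right
      rw [eq_bot_iff]
      refine Submodule.smul_le.mpr ?_
      intro r hr n _
      have hr' : r ∈ Module.annihilator R M := h hr
      rw [Module.mem_annihilator] at hr'
      simp [Submodule.mem_bot, hr' n]
end

section
/- A proper submodule K of M is completely coprime in M if and only if q := (K :_R M) is a completely prime ideal and M/K is a divisible R/q-module. -/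
/-- A proper submodule `K ⊊ M` is completely coprime in `M` iff
`q := (K :_R M)` is a completely prime ideal and `M/K` is a divisible `R/q`-module
(i.e. `rM + K = M` for every `r ∉ q`). -/
theorem statement8 {R M : Type*} [Ring R] [AddCommGroup M] [Module R M]
    (K : Submodule R M) (hK : K ≠ ⊤) :
    (∀ r : R, (∀ m : M, ∃ m' : M, m - r • m' ∈ K) ∨ (∀ m : M, r • m ∈ K)) ↔
      ((colonIdeal K ≠ ⊤ ∧
        ∀ a b : R, a * b ∈ colonIdeal K → a ∈ colonIdeal K ∨ b ∈ colonIdeal K) ∧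
        ∀ r : R, r ∉ colonIdeal K → ∀ m : M, ∃ m' : M, m - r • m' ∈ K) := by
  constructor
  · intro H
    refine ⟨⟨?_, ?_⟩, ?_⟩
    · intro htop
      apply hK
      have h1 : (1 : R) ∈ colonIdeal K := htop ▸ Submodule.mem_top
      ext m
      simp only [Submodule.mem_top, iff_true]
      simpa using h1 m
    · intro a b hab
      rcases H b with hb | hb
      · left
        intro m
        obtain ⟨m', hm'⟩ := hb m
        have h1 : a • (m - b • m') ∈ K := K.smul_mem a hm'
        have h2 : (a * b) • m' ∈ K := hab m'
        have : a • m = a • (m - b • m') + (a * b) • m' := by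
          rw [smul_sub, mul_smul]; abel
        rw [this]; exact K.add_mem h1 h2
      · right; exact hb
    · intro r hr m
      rcases H r with h | h
      · exact h m
      · exact absurd h hr
  · rintro ⟨⟨-, -⟩, hdiv⟩ r
    by_cases hr : r ∈ colonIdeal K
    · right; exact hr
    · left; exact hdiv r hr
end

section
/- If K ⊊ M is a proper submodule with (K :_R M) a maximal left ideal that is two-sided, then K is completely coprime in M. -/
/-- If `K ⊊ M` is a proper submodule with `(K :_R M)` a maximal left
ideal that is two-sided, then `K` is completely coprime in `M`:
for every `r : R`, `rM + K = M` or `rM ⊆ K`. -/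
theorem statement9 {R M : Type*} [Ring R] [AddCommGroup M] [Module R M]
    (K : Submodule R M) (hK : K ≠ ⊤)
    (hmax : (colonIdeal K).IsMaximal) (hts : IsTwoSidedIdeal (colonIdeal K)) :
    ∀ r : R, (∀ m : M, ∃ m' : M, m - r • m' ∈ K) ∨ (∀ m : M, r • m ∈ K) := by
  intro r
  by_cases hr : r ∈ colonIdeal K
  · exact Or.inr hr
  · left
    -- key: if x ∉ colonIdeal K then there is s with s*x - 1 ∈ colonIdeal K
    have key : ∀ x : R, x ∉ colonIdeal K → ∃ s : R, s * x - 1 ∈ colonIdeal K := by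
      intro x hx
      have htop : colonIdeal K ⊔ Ideal.span {x} = ⊤ := by
        rcases hmax with ⟨hne, hmaxi⟩
        by_contra h
        refine h (hmaxi _ (lt_of_le_of_ne le_sup_left ?_))
        intro heq
        exact hx (heq ▸ Submodule.mem_sup_right (Ideal.subset_span rfl))
      have h1 : (1 : R) ∈ colonIdeal K ⊔ Ideal.span {x} := htop ▸ Submodule.mem_top
      rcases Submodule.mem_sup.mp h1 with ⟨c, hc, y, hy, hcy⟩
      rcases Ideal.mem_span_singleton'.mp hy with ⟨s, hs⟩
      refine ⟨s, ?_⟩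
      have heq : s * x - 1 = -c := by rw [hs, ← hcy]; abel
      rw [heq]
      exact (colonIdeal K).neg_mem hc
    obtain ⟨s, hu⟩ := key r hr
    have hs : s ∉ colonIdeal K := by
      intro hsC
      have h1 : (1 : R) ∈ colonIdeal K := by
        have := (colonIdeal K).sub_mem (hts s hsC r) hu
        simpa using this
      exact hmax.ne_top ((Ideal.eq_top_iff_one _).mpr h1)
    obtain ⟨t, hv⟩ := key s hs
    have hrs : r * s - 1 ∈ colonIdeal K := by
      have h1 : t * (s * r - 1) * s ∈ colonIdeal K :=
        hts _ ((colonIdeal K).mul_mem_left t hu) s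
      have h2 : (t * s - 1) * (r * s) ∈ colonIdeal K := hts _ hv (r * s)
      have heq : r * s - 1 = (t * s - 1) + t * (s * r - 1) * s - (t * s - 1) * (r * s) := by
        noncomm_ring
      rw [heq]
      exact (colonIdeal K).sub_mem ((colonIdeal K).add_mem hv h1) h2
    intro m
    refine ⟨s • m, ?_⟩
    have : m - r • s • m = -((r * s - 1) • m) := by
      rw [sub_smul, one_smul, mul_smul, neg_sub]
    rw [this]
    exact K.neg_mem (hrs m)
end

section
/- Let {M_λ} be a family of nonzero R-modules all having the same annihilator p. Then the direct sum ⨁ M_λ is a coprime module if and only if each M_λ is a coprime module. -/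
open DirectSum in
/-- Let `{M i}` be a (nonempty) family of nonzero `R`-modules all having
the same annihilator `p`. Then `⨁ i, M i` is coprime iff each `M i` is coprime. -/
theorem statement10 {R : Type*} [Ring R] {ι : Type*} [Nonempty ι] (M : ι → Type*)
    [∀ i, AddCommGroup (M i)] [∀ i, Module R (M i)] [∀ i, Nontrivial (M i)]
    (p : Ideal R) (hp : ∀ i, Module.annihilator R (M i) = p) :
    IsCoprimeModule R (⨁ i, M i) ↔ ∀ i, IsCoprimeModule R (M i) := by
  classical
  constructor
  · intro h i I hI
    rcases h I hI with h1 | h1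
    · left
      have hsurj : Function.Surjective (DirectSum.component R ι M i) :=
        fun m => ⟨DirectSum.lof R ι M i m, DirectSum.component.lof_self R i m⟩
      have := congrArg (Submodule.map (DirectSum.component R ι M i)) h1
      rw [Submodule.map_smul'', Submodule.map_top, LinearMap.range_eq_top.mpr hsurj] at this
      exact this
    · right
      rw [eq_bot_iff, Submodule.smul_le] at h1 ⊢
      rintro r hr m -
      rw [Submodule.mem_bot]
      have h2 := h1 r hr (DirectSum.lof R ι M i m) trivial
      rw [Submodule.mem_bot] at h2
      have : DirectSum.component R ι M i (r • DirectSum.lof R ι M i m) = r • m := by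
        rw [map_smul, DirectSum.component.lof_self]
      rw [h2, map_zero] at this
      exact this.symm
  · intro h I hI
    by_cases hb : ∃ i, I • (⊤ : Submodule R (M i)) = ⊥
    · right
      obtain ⟨i₀, hi₀⟩ := hb
      have hIp : I ≤ p := by
        intro r hr
        rw [← hp i₀, Module.mem_annihilator]
        intro m
        rw [eq_bot_iff, Submodule.smul_le] at hi₀
        have := hi₀ r hr m trivial
        rwa [Submodule.mem_bot] at this
      have hann : ∀ r ∈ I, ∀ i, ∀ m : M i, r • m = 0 := by
        intro r hr i m
        have : r ∈ Module.annihilator R (M i) := by rw [hp i]; exact hIp hr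
        exact Module.mem_annihilator.mp this m
      rw [eq_bot_iff, Submodule.smul_le]
      rintro r hr x -
      rw [Submodule.mem_bot]
      induction x using DirectSum.induction_on with
      | zero => exact smul_zero r
      | of i m =>
        have : r • (DirectSum.of M i m) = DirectSum.of M i (r • m) := by
          exact (map_smul (DirectSum.lof R ι M i) r m).symm
        rw [this, hann r hr i m, map_zero]
      | add x y hx hy => rw [smul_add, hx, hy, add_zero]
    · left
      push_neg at hb
      have htop : ∀ i, I • (⊤ : Submodule R (M i)) = ⊤ := fun i =>
        (h i I hI).resolve_right (hb i)
      rw [eq_top_iff]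
      rintro x -
      induction x using DirectSum.induction_on with
      | zero => exact Submodule.zero_mem _
      | of i m =>
        have hm : m ∈ I • (⊤ : Submodule R (M i)) := by rw [htop i]; trivial
        have hmem : (DirectSum.of M i m : ⨁ i, M i) ∈
            Submodule.map (DirectSum.lof R ι M i) (I • ⊤) := ⟨m, hm, rfl⟩
        rw [Submodule.map_smul''] at hmem
        exact (smul_mono_right I le_top : I • _ ≤ I • (⊤ : Submodule R (⨁ i, M i))) hmem
      | add x y hx hy => exact Submodule.add_mem _ hx hy
end

section
/- For submodules defined by annihilators: for any two ideals I, Ĩ of R, the set of second submodules contained in (0:_M I) + (0:_M Ĩ) equals the union of the second submodules contained in (0:_M I) and those contained in (0:_M Ĩ); moreover both equal the set of second submodules contained in (0:_M I·Ĩ). -/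
lemma le_ann_iff {R M : Type*} [Ring R] [AddCommGroup M] [Module R M]
    {I : Ideal R} {hI : IsTwoSidedIdeal I} {K : Submodule R M} :
    K ≤ annSubmodule I hI ↔ I • K = ⊥ := by
  constructor
  · intro h
    refine le_bot_iff.1 (Submodule.smul_le.2 fun r hr m hm => ?_)
    simpa using h hm r hr
  · intro h m hm r hr
    have : r • m ∈ I • K := Submodule.smul_mem_smul hr hm
    rw [h] at this
    simpa using this

lemma mul_le_left' {R : Type*} [Ring R] {I J : Ideal R} (hI : IsTwoSidedIdeal I) :
    I * J ≤ I :=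
  Ideal.mul_le.2 fun r hr s _ => hI r hr s

lemma mul_le_right' {R : Type*} [Ring R] {I J : Ideal R} : I * J ≤ J :=
  Ideal.mul_le.2 fun r _ s hs => by
    simpa using J.smul_mem r hs

/-- For two-sided ideals `I, Ĩ` of `R`:
`V^s((0:_M I)) ∪ V^s((0:_M Ĩ)) = V^s((0:_M I) + (0:_M Ĩ)) = V^s((0:_M I ∩ Ĩ)) = V^s((0:_M I·Ĩ))`. -/
theorem statement12 {R M : Type*} [Ring R] [AddCommGroup M] [Module R M]
    (I J : Ideal R) (hI : IsTwoSidedIdeal I) (hJ : IsTwoSidedIdeal J) :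
    secondVariety ((annSubmodule I hI : Submodule R M) ⊔ annSubmodule J hJ) =
        secondVariety (annSubmodule I hI : Submodule R M) ∪
          secondVariety (annSubmodule J hJ : Submodule R M) ∧
      secondVariety ((annSubmodule I hI : Submodule R M) ⊔ annSubmodule J hJ) =
        secondVariety (annSubmodule (I ⊓ J) (hI.inf hJ) : Submodule R M) ∧
      secondVariety ((annSubmodule I hI : Submodule R M) ⊔ annSubmodule J hJ) =
        secondVariety (annSubmodule (I * J) (IsTwoSidedIdeal.mul hJ) : Submodule R M) := by
  have key : ∀ K : Submodule R M, IsSecondSubmodule K →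
      (K ≤ annSubmodule (I * J) (IsTwoSidedIdeal.mul hJ) →
        K ≤ annSubmodule I hI ∨ K ≤ annSubmodule J hJ) := by
    intro K hK h
    rw [le_ann_iff] at h
    rw [le_ann_iff, le_ann_iff]
    have hIJ : I • J • K = ⊥ := by
      rw [← Submodule.smul_assoc, Ideal.smul_eq_mul]; exact h
    rcases hK.2 J hJ with h2 | h2
    · left; rwa [h2] at hIJ
    · right; exact h2
  have hsup_le_inf : (annSubmodule I hI : Submodule R M) ⊔ annSubmodule J hJ ≤
      annSubmodule (I ⊓ J) (hI.inf hJ) := by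
    refine sup_le (fun m hm r hr => hm r hr.1) (fun m hm r hr => hm r hr.2)
  have hinf_le_mul : (annSubmodule (I ⊓ J) (hI.inf hJ) : Submodule R M) ≤
      annSubmodule (I * J) (IsTwoSidedIdeal.mul hJ) := by
    intro m hm r hr
    exact hm r ⟨mul_le_left' hI hr, mul_le_right' hr⟩
  have hunion : secondVariety ((annSubmodule I hI : Submodule R M) ⊔ annSubmodule J hJ) =
      secondVariety (annSubmodule I hI : Submodule R M) ∪
        secondVariety (annSubmodule J hJ : Submodule R M) := by
    ext K
    constructor
    · rintro ⟨hK, hle⟩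
      rcases key K hK (le_trans hle (le_trans hsup_le_inf hinf_le_mul)) with h | h
      · exact Or.inl ⟨hK, h⟩
      · exact Or.inr ⟨hK, h⟩
    · rintro (⟨hK, hle⟩ | ⟨hK, hle⟩)
      · exact ⟨hK, le_trans hle le_sup_left⟩
      · exact ⟨hK, le_trans hle le_sup_right⟩
  have hmul : secondVariety ((annSubmodule I hI : Submodule R M) ⊔ annSubmodule J hJ) =
      secondVariety (annSubmodule (I * J) (IsTwoSidedIdeal.mul hJ) : Submodule R M) := by
    ext K
    constructor
    · rintro ⟨hK, hle⟩
      exact ⟨hK, le_trans hle (le_trans hsup_le_inf hinf_le_mul)⟩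
    · rintro ⟨hK, hle⟩
      refine ⟨hK, ?_⟩
      rcases key K hK hle with h | h
      · exact le_trans h le_sup_left
      · exact le_trans h le_sup_right
  refine ⟨hunion, ?_, hmul⟩
  ext K
  constructor
  · rintro ⟨hK, hle⟩
    exact ⟨hK, le_trans hle hsup_le_inf⟩
  · rintro ⟨hK, hle⟩
    have : K ∈ secondVariety ((annSubmodule I hI : Submodule R M) ⊔ annSubmodule J hJ) := by
      rw [hmul]; exact ⟨hK, le_trans hle hinf_le_mul⟩
    exact this
end

section
/- If every second submodule of M is strongly hollow, then for all submodules L₁, L₂ of M, V^s(L₁ + L₂) = V^s(L₁) ∪ V^s(L₂); consequently the sets V^s(L) form the closed sets of a topology on Spec^s(M). -/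
/-- If every second submodule of `M` is strongly hollow, then
`V^s(L₁ + L₂) = V^s(L₁) ∪ V^s(L₂)` for all submodules `L₁, L₂`; consequently the
sets `V^s(L)` are the closed sets of a topology on `Spec^s(M)`. -/
theorem statement13 {R M : Type*} [Ring R] [AddCommGroup M] [Module R M]
    (hsh : ∀ K : Submodule R M, IsSecondSubmodule K → StronglyHollowIn K) :
    (∀ L₁ L₂ : Submodule R M,
        secondVariety (L₁ ⊔ L₂) = secondVariety L₁ ∪ secondVariety L₂) ∧
      ∃ t : TopologicalSpace {K : Submodule R M // IsSecondSubmodule K},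
        ∀ A : Set {K : Submodule R M // IsSecondSubmodule K},
          @IsClosed _ t A ↔ ∃ L : Submodule R M, A = {K : {K : Submodule R M // IsSecondSubmodule K} | K.1 ≤ L} := by
  have key : ∀ (L₁ L₂ : Submodule R M) (K : Submodule R M), IsSecondSubmodule K →
      (K ≤ L₁ ⊔ L₂ ↔ K ≤ L₁ ∨ K ≤ L₂) := by
    intro L₁ L₂ K hK
    constructor
    · intro h
      exact (hsh K hK).2 L₁ L₂ h
    · rintro (h | h)
      · exact h.trans le_sup_left
      · exact h.trans le_sup_right
  constructor
  · intro L₁ L₂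
    ext K
    simp only [secondVariety, Set.mem_setOf_eq, Set.mem_union]
    constructor
    · rintro ⟨hK, hle⟩
      rcases (key L₁ L₂ K hK).mp hle with h | h
      · exact Or.inl ⟨hK, h⟩
      · exact Or.inr ⟨hK, h⟩
    · rintro (⟨hK, h⟩ | ⟨hK, h⟩)
      · exact ⟨hK, h.trans le_sup_left⟩
      · exact ⟨hK, h.trans le_sup_right⟩
  · set X := {K : Submodule R M // IsSecondSubmodule K}
    set T : Set (Set X) := {A | ∃ L : Submodule R M, A = {K : X | K.1 ≤ L}}
    have hUniv : (∅ : Set X) ∈ T := by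
      refine ⟨⊥, ?_⟩
      ext K
      simp only [Set.mem_empty_iff_false, Set.mem_setOf_eq, le_bot_iff, false_iff]
      exact K.2.1
    have hInter : ∀ s ⊆ T, ⋂₀ s ∈ T := by
      intro s hs
      refine ⟨⨅ (A : s), Classical.choose (hs A.2), ?_⟩
      ext K
      simp only [Set.mem_sInter, Set.mem_setOf_eq, le_iInf_iff]
      constructor
      · intro h A
        have := h A.1 A.2
        rwa [Classical.choose_spec (hs A.2)] at this
      · intro h A hA
        rw [Classical.choose_spec (hs hA)]
        exact h ⟨A, hA⟩
    have hUnion : ∀ s ∈ T, ∀ t ∈ T, s ∪ t ∈ T := by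
      rintro s ⟨L₁, rfl⟩ t ⟨L₂, rfl⟩
      refine ⟨L₁ ⊔ L₂, ?_⟩
      ext K
      simp only [Set.mem_union, Set.mem_setOf_eq]
      exact (key L₁ L₂ K.1 K.2).symm
    refine ⟨TopologicalSpace.ofClosed T hUniv hInter hUnion, ?_⟩
    intro A
    have : @IsClosed X (TopologicalSpace.ofClosed T hUniv hInter hUnion) A ↔ A ∈ T := by
      rw [← @isOpen_compl_iff]
      show Aᶜᶜ ∈ T ↔ A ∈ T
      rw [compl_compl]
    rw [this]
    rfl
end

section
/- Suppose every second submodule of M is strongly hollow and A is a nonempty subset of Spec^s(M) that is irreducible in the topology whose closed sets are the V^s(L). Then the sum H(A) = Σ_{K ∈ A} K is a second submodule of M. -/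
/-- Suppose every second submodule of `M` is strongly hollow and `A` is
a nonempty subset of `Spec^s(M)` that is irreducible in the topology whose closed sets
are the `V^s(L)`. Then `H(A) = Σ_{K ∈ A} K` is a second submodule of `M`. -/
theorem statement15 {R M : Type*} [Ring R] [AddCommGroup M] [Module R M]
    (hsh : ∀ K : Submodule R M, IsSecondSubmodule K → StronglyHollowIn K)
    (A : Set (Submodule R M)) (hA : ∀ K ∈ A, IsSecondSubmodule K) (hne : A.Nonempty)
    (hirr : ∀ L₁ L₂ : Submodule R M,
      A ⊆ secondVariety L₁ ∪ secondVariety L₂ →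
        A ⊆ secondVariety L₁ ∨ A ⊆ secondVariety L₂) :
    IsSecondSubmodule (sSup A) := by
  obtain ⟨K0, hK0⟩ := hne
  constructor
  · intro hbot
    have : K0 ≤ sSup A := le_sSup hK0
    rw [hbot, le_bot_iff] at this
    exact (hA K0 hK0).1 this
  · intro I hI
    have hsub : A ⊆ secondVariety (I • sSup A) ∪ secondVariety (annSubmodule I hI) := by
      intro K hK
      rcases (hA K hK).2 I hI with h | h
      · left
        refine ⟨hA K hK, ?_⟩
        calc K = I • K := h.symm
          _ ≤ I • sSup A := smul_mono_right _ (le_sSup hK)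
      · right
        refine ⟨hA K hK, ?_⟩
        intro m hm r hr
        have : r • m ∈ I • K := Submodule.smul_mem_smul hr hm
        rw [h] at this
        exact this
    rcases hirr _ _ hsub with h | h
    · left
      have h1 : sSup A ≤ I • sSup A := by
        apply sSup_le
        intro K hK
        exact (h hK).2
      exact le_antisymm Submodule.smul_le_right h1
    · right
      rw [eq_bot_iff]
      rw [Submodule.smul_le]
      intro r hr n hn
      have hn' : n ∈ annSubmodule (M := M) I hI := by
        have : sSup A ≤ annSubmodule I hI := sSup_le fun K hK => (h hK).2
        exact this hn
      simpa using hn' r hr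
end

section
/- For any two ideals I, Ĩ of R: the set of coprime submodules of M containing I•M ∩ Ĩ•M equals the union of the sets of coprime submodules containing I•M and containing Ĩ•M, and both equal the set of coprime submodules containing (IĨ)•M. -/
lemma coprimeVariety_anti {R M : Type*} [Ring R] [AddCommGroup M] [Module R M]
    {L₁ L₂ : Submodule R M} (h : L₁ ≤ L₂) : coprimeVariety L₂ ⊆ coprimeVariety L₁ :=
  fun _ hK => ⟨hK.1, h.trans hK.2⟩

lemma key_coprime {R M : Type*} [Ring R] [AddCommGroup M] [Module R M]
    {K : Submodule R M} (hK : IsCoprimeSubmodule K) (I J : Ideal R)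
    (hI : IsTwoSidedIdeal I) (hJ : IsTwoSidedIdeal J)
    (h : (I * J) • (⊤ : Submodule R M) ≤ K) :
    I • (⊤ : Submodule R M) ≤ K ∨ J • (⊤ : Submodule R M) ≤ K := by
  rcases hK.2 I hI with h1 | h1
  · rcases hK.2 J hJ with h2 | h2
    · exfalso
      apply hK.1
      have hIJ : I • (J • (⊤ : Submodule R M)) ≤ K := by
        have e : (I * J) • (⊤ : Submodule R M) = I • (J • (⊤ : Submodule R M)) := by
          rw [← Submodule.smul_assoc]; rfl
        rwa [e] at h
      have hIK : I • (⊤ : Submodule R M) ≤ K := by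
        calc I • (⊤ : Submodule R M) = I • (J • (⊤ : Submodule R M) ⊔ K) := by rw [h2]
          _ = I • (J • (⊤ : Submodule R M)) ⊔ I • K := Submodule.smul_sup _ _ _
          _ ≤ K ⊔ K := sup_le_sup hIJ Submodule.smul_le_right
          _ = K := sup_idem K
      rw [← h1]
      exact (le_antisymm (sup_le hIK le_rfl) le_sup_right).symm
    · exact Or.inr h2
  · exact Or.inl h1

/-- For two-sided ideals `I, Ĩ` of `R`:
`V^c(IM) ∪ V^c(ĨM) = V^c(IM ∩ ĨM) = V^c((I ∩ Ĩ)M) = V^c((IĨ)M)`. -/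
theorem statement16 {R M : Type*} [Ring R] [AddCommGroup M] [Module R M]
    (I J : Ideal R) (hI : IsTwoSidedIdeal I) (hJ : IsTwoSidedIdeal J) :
    coprimeVariety (I • (⊤ : Submodule R M) ⊓ J • (⊤ : Submodule R M)) =
        coprimeVariety (I • (⊤ : Submodule R M)) ∪
          coprimeVariety (J • (⊤ : Submodule R M)) ∧
      coprimeVariety (I • (⊤ : Submodule R M) ⊓ J • (⊤ : Submodule R M)) =
        coprimeVariety ((I ⊓ J) • (⊤ : Submodule R M)) ∧
      coprimeVariety (I • (⊤ : Submodule R M) ⊓ J • (⊤ : Submodule R M)) =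
        coprimeVariety ((I * J) • (⊤ : Submodule R M)) := by
  have hmul_le_inf : (I * J) • (⊤ : Submodule R M) ≤ (I ⊓ J) • (⊤ : Submodule R M) :=
    Submodule.smul_mono_left (Ideal.mul_le.2 fun r hr s hs =>
      ⟨hI r hr s, Ideal.mul_mem_left J r hs⟩)
  have hinf_le : (I ⊓ J) • (⊤ : Submodule R M) ≤
      I • (⊤ : Submodule R M) ⊓ J • (⊤ : Submodule R M) :=
    le_inf (Submodule.smul_mono_left inf_le_left) (Submodule.smul_mono_left inf_le_right)
  -- chain of inclusions
  have s1 : coprimeVariety (I • (⊤ : Submodule R M) ⊓ J • (⊤ : Submodule R M)) ⊆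
      coprimeVariety ((I ⊓ J) • (⊤ : Submodule R M)) := coprimeVariety_anti hinf_le
  have s2 : coprimeVariety ((I ⊓ J) • (⊤ : Submodule R M)) ⊆
      coprimeVariety ((I * J) • (⊤ : Submodule R M)) := coprimeVariety_anti hmul_le_inf
  have s3 : coprimeVariety ((I * J) • (⊤ : Submodule R M)) ⊆
      coprimeVariety (I • (⊤ : Submodule R M)) ∪ coprimeVariety (J • (⊤ : Submodule R M)) := by
    intro K hK
    rcases key_coprime hK.1 I J hI hJ hK.2 with h | h
    · exact Or.inl ⟨hK.1, h⟩
    · exact Or.inr ⟨hK.1, h⟩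
  have s4 : coprimeVariety (I • (⊤ : Submodule R M)) ∪
      coprimeVariety (J • (⊤ : Submodule R M)) ⊆
      coprimeVariety (I • (⊤ : Submodule R M) ⊓ J • (⊤ : Submodule R M)) := by
    rintro K (hK | hK)
    · exact ⟨hK.1, inf_le_left.trans hK.2⟩
    · exact ⟨hK.1, inf_le_right.trans hK.2⟩
  refine ⟨?_, ?_, ?_⟩
  · exact Set.Subset.antisymm (fun K hK => s3 (s2 (s1 hK))) s4
  · exact Set.Subset.antisymm s1 (fun K hK => s4 (s3 (s2 hK)))
  · exact Set.Subset.antisymm (fun K hK => s2 (s1 hK)) (fun K hK => s4 (s3 hK))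
end

section
/- If every coprime submodule of M is strongly irreducible, then for all submodules L₁, L₂ of M, V^c(L₁ ∩ L₂) = V^c(L₁) ∪ V^c(L₂); consequently the sets V^c(L) form the closed sets of a topology on Spec^c(M). -/
lemma union_eq_inf {R M : Type*} [Ring R] [AddCommGroup M] [Module R M]
    (hsi : ∀ K : Submodule R M, IsCoprimeSubmodule K → StronglyIrreducibleIn K)
    (L₁ L₂ : Submodule R M) :
    {K : {K : Submodule R M // IsCoprimeSubmodule K} | L₁ ≤ K.1} ∪
      {K | L₂ ≤ K.1} = {K | L₁ ⊓ L₂ ≤ K.1} := by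
  ext K
  simp only [Set.mem_union, Set.mem_setOf_eq]
  constructor
  · rintro (h | h)
    · exact le_trans inf_le_left h
    · exact le_trans inf_le_right h
  · intro h
    exact (hsi K.1 K.2).2 L₁ L₂ h


/-- If every coprime submodule of `M` is strongly irreducible, then
`V^c(L₁ ∩ L₂) = V^c(L₁) ∪ V^c(L₂)` for all submodules `L₁, L₂`; consequently the
sets `V^c(L)` are the closed sets of a topology on `Spec^c(M)`. -/
theorem statement17 {R M : Type*} [Ring R] [AddCommGroup M] [Module R M]
    (hsi : ∀ K : Submodule R M, IsCoprimeSubmodule K → StronglyIrreducibleIn K) :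
    (∀ L₁ L₂ : Submodule R M,
        coprimeVariety (L₁ ⊓ L₂) = coprimeVariety L₁ ∪ coprimeVariety L₂) ∧
      ∃ t : TopologicalSpace {K : Submodule R M // IsCoprimeSubmodule K},
        ∀ A : Set {K : Submodule R M // IsCoprimeSubmodule K},
          @IsClosed _ t A ↔ ∃ L : Submodule R M, A = {K : {K : Submodule R M // IsCoprimeSubmodule K} | L ≤ K.1} := by
  
  constructor
  · intro L₁ L₂
    ext K
    simp only [coprimeVariety, Set.mem_setOf_eq, Set.mem_union]
    constructor
    · rintro ⟨hK, hle⟩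
      rcases (hsi K hK).2 L₁ L₂ hle with h | h
      · exact Or.inl ⟨hK, h⟩
      · exact Or.inr ⟨hK, h⟩
    · rintro (⟨hK, h⟩ | ⟨hK, h⟩)
      · exact ⟨hK, le_trans inf_le_left h⟩
      · exact ⟨hK, le_trans inf_le_right h⟩
  · set T : Set (Set {K : Submodule R M // IsCoprimeSubmodule K}) :=
      {A | ∃ L : Submodule R M, A = {K | L ≤ K.1}} with hT
    have hempty : ∅ ∈ T := by
      refine ⟨⊤, ?_⟩
      ext K
      simp only [Set.mem_empty_iff_false, Set.mem_setOf_eq, top_le_iff, false_iff]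
      exact K.2.1
    have hsInter : ∀ A, A ⊆ T → ⋂₀ A ∈ T := by
      intro A hA
      refine ⟨sSup {L : Submodule R M | {K : {K : Submodule R M // IsCoprimeSubmodule K} | L ≤ K.1} ∈ A}, ?_⟩
      ext K
      simp only [Set.mem_sInter, Set.mem_setOf_eq, sSup_le_iff]
      constructor
      · intro h L hL
        exact h _ hL
      · intro h s hs
        obtain ⟨L, rfl⟩ := hA hs
        exact h L hs
    have hunion : ∀ A, A ∈ T → ∀ B, B ∈ T → A ∪ B ∈ T := by
      rintro _ ⟨L₁, rfl⟩ _ ⟨L₂, rfl⟩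
      exact ⟨L₁ ⊓ L₂, union_eq_inf hsi L₁ L₂⟩
    refine ⟨TopologicalSpace.ofClosed T hempty hsInter hunion, fun A => ?_⟩
    have : @IsClosed _ (TopologicalSpace.ofClosed T hempty hsInter hunion) A ↔ A ∈ T := by
      constructor
      · intro h
        have h2 := h.1
        change Aᶜᶜ ∈ T at h2
        simpa using h2
      · intro h
        refine @IsClosed.mk _ (TopologicalSpace.ofClosed T hempty hsInter hunion) _ ?_
        show Aᶜᶜ ∈ T
        simpa using h
    exact this
end

section
/- If M is a multiplication module, then every coprime submodule of M is strongly irreducible, and the set of coprime submodules equals the set of maximal submodules of M. -/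
section Prelim

variable {R : Type*} [Ring R] {M : Type*} [AddCommGroup M] [Module R M]

lemma colonIdeal_twoSided {R : Type*} [Ring R] {M : Type*} [AddCommGroup M] [Module R M]
    (K : Submodule R M) : IsTwoSidedIdeal (colonIdeal K) := by
  intro r hr s m
  rw [mul_smul]
  exact hr _

end Prelim

/-- If `M` is a multiplication module, then every coprime submodule of
`M` is strongly irreducible, and the coprime submodules of `M` are exactly the maximal
submodules of `M`. -/
theorem statement18 {R M : Type*} [Ring R] [AddCommGroup M] [Module R M]
    (hmul : ∀ L : Submodule R M, colonIdeal L • (⊤ : Submodule R M) = L) :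
    (∀ K : Submodule R M, IsCoprimeSubmodule K → StronglyIrreducibleIn K) ∧
      (∀ K : Submodule R M, IsCoprimeSubmodule K ↔ IsCoatom K) := by
  have key : ∀ K : Submodule R M, IsCoprimeSubmodule K → StronglyIrreducibleIn K := by
    intro K hK
    refine ⟨hK.1, fun L₁ L₂ hle => ?_⟩
    rcases hK.2 (colonIdeal L₁) (colonIdeal_twoSided L₁) with h1 | h1
    · right
      rw [hmul L₁] at h1
      have hL2 : L₂ = colonIdeal L₂ • L₁ ⊔ colonIdeal L₂ • K := by
        rw [← Submodule.smul_sup, h1, hmul L₂]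
      have h2 : colonIdeal L₂ • L₁ ≤ K := by
        refine le_trans (le_inf Submodule.smul_le_right ?_) hle
        exact le_trans (Submodule.smul_mono le_rfl le_top) (le_of_eq (hmul L₂))
      have h3 : colonIdeal L₂ • K ≤ K := Submodule.smul_le_right
      rw [hL2]
      exact sup_le h2 h3
    · left
      rw [hmul L₁] at h1
      exact h1
  refine ⟨key, fun K => ⟨fun hK => ?_, fun hK => ?_⟩⟩
  · refine ⟨hK.1, fun L hL => ?_⟩
    rcases hK.2 (colonIdeal L) (colonIdeal_twoSided L) with h | h
    · rw [hmul L, sup_eq_left.mpr hL.le] at h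
      exact h
    · rw [hmul L] at h
      exact absurd h hL.not_ge
  · refine ⟨hK.1, fun I hI => ?_⟩
    by_cases h : I • (⊤ : Submodule R M) ⊔ K = ⊤
    · exact Or.inl h
    · right
      rcases lt_or_eq_of_le (le_sup_right : K ≤ I • (⊤ : Submodule R M) ⊔ K) with h' | h'
      · exact absurd (hK.2 _ h') h
      · exact le_trans le_sup_left h'.symm.le
end
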